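/- For integers n ≥ m ≥ 1 and 0 ≤ ℓ ≤ n − m, the weighted Lah numbers satisfy the symmetry W(ℓ, n, m) = W(n − m − ℓ, n, m). -/

import Mathlib

open Finset Polynomial

/-- Number of lattice points of the `t`-th dilate of the hypersimplex `Δ_{k,n}`:
vectors `y ∈ {0,1,…,t}^n` with `y 0 + ⋯ + y (n-1) = k*t`. -/
def latticeCount (n k t : ℕ) : ℕ :=
  ((Fintype.piFinset fun _ : Fin n => Finset.range (t + 1)).filter
    fun y => ∑ i, y i = k * t).card

/-- The weight of a linearly ordered block (given as a list): the number of its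
entries that are strictly smaller than its first entry. -/
def blockWeight (b : List ℕ) : ℕ := b.countP fun x => decide (x < b.headI)

/-- `P` is a partition of `{1,…,n}` into `m` linearly ordered blocks: a set of `m`
nonempty duplicate-free lists, pairwise disjoint, whose entries cover `{1,…,n}`. -/
def IsLOPartition (n m : ℕ) (P : Finset (List ℕ)) : Prop :=
  P.card = m ∧
  (∀ b ∈ P, b ≠ [] ∧ b.Nodup) ∧
  (∀ b ∈ P, ∀ c ∈ P, b ≠ c → ∀ x ∈ b, x ∉ c) ∧
  ∀ x : ℕ, (∃ b ∈ P, x ∈ b) ↔ x ∈ Finset.Icc 1 n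

/-- The weight of a linearly ordered partition: sum of the weights of its blocks. -/
def partWeight (P : Finset (List ℕ)) : ℕ := ∑ b ∈ P, blockWeight b

/-- The Lah number `L(n,m)`: number of partitions of `{1,…,n}` into `m` linearly
ordered blocks. -/
noncomputable def lah (n m : ℕ) : ℕ := Nat.card {P : Finset (List ℕ) // IsLOPartition n m P}

/-- The weighted Lah number `W(ℓ,n,m)`: number of partitions of `{1,…,n}` into `m`
linearly ordered blocks having weight `ℓ` (zero for negative `ℓ`). -/
noncomputable def weightedLah (ℓ : ℤ) (n m : ℕ) : ℕ :=
  Nat.card {P : Finset (List ℕ) // IsLOPartition n m P ∧ (partWeight P : ℤ) = ℓ}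

/-- Unsigned Stirling number of the first kind `⟦a,b⟧`: number of permutations of a
set with `a` elements having exactly `b` cycles (fixed points count as cycles). -/
noncomputable def stirling1 (a b : ℕ) : ℕ :=
  Nat.card {σ : Equiv.Perm (Fin a) // σ.cycleType.card + (a - σ.support.card) = b}

/-- Unsigned Stirling number of the first kind with the convention that it vanishes
on negative arguments. -/
noncomputable def stirlingZ (a b : ℤ) : ℤ :=
  if 0 ≤ a ∧ 0 ≤ b then stirling1 a.toNat b.toNat else 0

/-- Eulerian number `A(m,j)`: number of permutations of `{1,…,m}` with exactly `j`
descents, `A(0,0) = 1`. -/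
def eulerian : ℕ → ℕ → ℕ
  | 0, 0 => 1
  | 0, _ + 1 => 0
  | _ + 1, 0 => 1
  | m + 1, j + 1 => (j + 2) * eulerian m (j + 1) + (m - j) * eulerian m j

/-- Katzman's formula: `E_{k,n}(t) = Σ_{j=0}^{k-1} (-1)^j C(n,j) binom((k-j)t+n-1-j, n-1)`
as a polynomial in `t` over `ℚ`. -/
noncomputable def EhrhartHyp (k n : ℕ) : Polynomial ℚ :=
  (((n - 1).factorial : ℚ))⁻¹ • ∑ j ∈ Finset.range k,
    ((-1 : ℚ) ^ j * (n.choose j : ℚ)) •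
      ∏ i ∈ Finset.Icc 1 (n - 1), (C ((k : ℚ) - (j : ℚ)) * X + C ((i : ℚ) - (j : ℚ)))

def flipN (n x : ℕ) : ℕ := n + 1 - x

def flipL (n : ℕ) (b : List ℕ) : List ℕ := b.map (flipN n)

def flipP (n : ℕ) (P : Finset (List ℕ)) : Finset (List ℕ) := P.image (flipL n)

lemma countA (l : List ℕ) (a : ℕ) (h : a ∉ l) :
    l.countP (fun x => decide (x < a)) + l.countP (fun x => decide (a < x)) = l.length := by
  induction l with
  | nil => simp
  | cons y t ih =>
    simp only [List.mem_cons, not_or] at h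
    simp only [List.countP_cons, List.length_cons]
    have := ih h.2
    have hy : y ≠ a := fun e => h.1 e.symm
    rcases lt_trichotomy y a with h1 | h1 | h1
    · simp [h1, not_lt_of_gt h1]; omega
    · exact absurd h1 hy
    · simp [h1, not_lt_of_gt h1]; omega

lemma countB (l : List ℕ) (a : ℕ) (hnd : l.Nodup) (ha : a ∈ l) :
    l.countP (fun x => decide (x < a)) + l.countP (fun x => decide (a < x)) + 1 = l.length := by
  induction l with
  | nil => simp at ha
  | cons y t ih =>
    simp only [List.nodup_cons] at hnd
    simp only [List.mem_cons] at ha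
    simp only [List.countP_cons, List.length_cons]
    rcases ha with rfl | ha
    · have := countA t a hnd.1
      simp; omega
    · have := ih hnd.2 ha
      have hy : y ≠ a := fun e => hnd.1 (e ▸ ha)
      rcases lt_trichotomy y a with h1 | h1 | h1
      · simp [h1, not_lt_of_gt h1]; omega
      · exact absurd h1 hy
      · simp [h1, not_lt_of_gt h1]; omega

lemma blockWeight_flip (n : ℕ) (b : List ℕ) (hne : b ≠ []) (hnd : b.Nodup)
    (hmem : ∀ x ∈ b, x ∈ Finset.Icc 1 n) :
    blockWeight (flipL n b) + blockWeight b + 1 = b.length := by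
  obtain ⟨a, t, rfl⟩ := List.exists_cons_of_ne_nil hne
  have ha1 : a ∈ Finset.Icc 1 n := hmem a List.mem_cons_self
  simp only [Finset.mem_Icc] at ha1
  have hflip : blockWeight (flipL n (a :: t)) =
      (a :: t).countP (fun x => decide (a < x)) := by
    simp only [blockWeight, flipL, List.map_cons, List.headI_cons]
    rw [show (flipN n a :: List.map (flipN n) t) = List.map (flipN n) (a :: t) from rfl,
      List.countP_map]
    apply List.countP_congr
    intro x hx
    have hx1 := hmem x hx
    simp only [Finset.mem_Icc] at hx1
    simp only [Function.comp, flipN, decide_eq_true_eq]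
    show decide (flipN n x < flipN n a) = true ↔ a < x
    rw [decide_eq_true_iff]; unfold flipN
    constructor <;> (intro; omega)
  have hB := countB (a :: t) a hnd List.mem_cons_self
  have hbw : blockWeight (a :: t) = (a :: t).countP (fun x => decide (x < a)) := by
    simp [blockWeight]; rfl
  omega

lemma flipL_flipL {n : ℕ} {b : List ℕ} (h : ∀ x ∈ b, x ∈ Finset.Icc 1 n) :
    flipL n (flipL n b) = b := by
  simp only [flipL, List.map_map]
  conv_rhs => rw [← List.map_id b]
  apply List.map_congr_left
  intro x hx
  have := h x hx
  simp only [Finset.mem_Icc] at this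
  simp only [Function.comp, flipN, id]
  omega

lemma isLOP_flip {n m : ℕ} {P : Finset (List ℕ)} (hP : IsLOPartition n m P) :
    IsLOPartition n m (flipP n P) := by
  obtain ⟨hcard, hblocks, hdisj, hcover⟩ := hP
  have hIcc : ∀ b ∈ P, ∀ x ∈ b, x ∈ Finset.Icc 1 n := fun b hb x hx => (hcover x).1 ⟨b, hb, hx⟩
  have hinj : Set.InjOn (flipL n) P := by
    intro b hb c hc h
    rw [← flipL_flipL (hIcc b hb), h, flipL_flipL (hIcc c hc)]
  refine ⟨?_, ?_, ?_, ?_⟩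
  · rw [flipP, Finset.card_image_of_injOn hinj, hcard]
  · intro b' hb'
    obtain ⟨b, hb, rfl⟩ := Finset.mem_image.mp hb'
    obtain ⟨hne, hnd⟩ := hblocks b hb
    refine ⟨by simpa [flipL] using hne, ?_⟩
    apply List.Nodup.map_on ?_ hnd
    intro x hx y hy hxy
    have h1 := hIcc b hb x hx
    have h2 := hIcc b hb y hy
    simp only [Finset.mem_Icc] at h1 h2
    simp only [flipN] at hxy
    omega
  · intro b' hb' c' hc' hne x hxb hxc
    obtain ⟨b, hb, rfl⟩ := Finset.mem_image.mp hb'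
    obtain ⟨c, hc, rfl⟩ := Finset.mem_image.mp hc'
    have hbc : b ≠ c := fun h => hne (h ▸ rfl)
    simp only [flipL, List.mem_map] at hxb hxc
    obtain ⟨y, hy, rfl⟩ := hxb
    obtain ⟨z, hz, hzy⟩ := hxc
    have h1 := hIcc b hb y hy
    have h2 := hIcc c hc z hz
    simp only [Finset.mem_Icc] at h1 h2
    have hzyeq : z = y := by simp only [flipN] at hzy; omega
    exact hdisj b hb c hc hbc y hy (hzyeq ▸ hz)
  · intro x
    constructor
    · rintro ⟨b', hb', hx⟩
      obtain ⟨b, hb, rfl⟩ := Finset.mem_image.mp hb'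
      simp only [flipL, List.mem_map] at hx
      obtain ⟨y, hy, rfl⟩ := hx
      have := hIcc b hb y hy
      simp only [Finset.mem_Icc, flipN] at this ⊢
      omega
    · intro hx
      simp only [Finset.mem_Icc] at hx
      have hx' : flipN n x ∈ Finset.Icc 1 n := by
        simp only [Finset.mem_Icc, flipN]; omega
      obtain ⟨b, hb, hy⟩ := (hcover _).2 hx'
      refine ⟨flipL n b, Finset.mem_image_of_mem _ hb, ?_⟩
      simp only [flipL, List.mem_map]
      exact ⟨flipN n x, hy, by simp only [flipN]; omega⟩

lemma sum_lengths {n m : ℕ} {P : Finset (List ℕ)} (hP : IsLOPartition n m P) :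
    ∑ b ∈ P, b.length = n := by
  obtain ⟨hcard, hblocks, hdisj, hcover⟩ := hP
  have h1 : ∀ b ∈ P, b.length = b.toFinset.card := fun b hb =>
    (List.toFinset_card_of_nodup (hblocks b hb).2).symm
  rw [Finset.sum_congr rfl h1]
  have hd : ∀ b ∈ P, ∀ c ∈ P, b ≠ c → Disjoint b.toFinset c.toFinset := by
    intro b hb c hc hne
    rw [Finset.disjoint_left]
    intro x hxb hxc
    rw [List.mem_toFinset] at hxb hxc
    exact hdisj b hb c hc hne x hxb hxc
  rw [← Finset.card_biUnion hd]
  have : P.biUnion (fun b => b.toFinset) = Finset.Icc 1 n := by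
    ext x
    simp only [Finset.mem_biUnion, List.mem_toFinset]
    exact hcover x
  rw [this, Nat.card_Icc]
  omega

lemma partWeight_flip {n m : ℕ} {P : Finset (List ℕ)} (hP : IsLOPartition n m P) :
    (partWeight (flipP n P) : ℤ) = (n : ℤ) - m - partWeight P := by
  have hIcc : ∀ b ∈ P, ∀ x ∈ b, x ∈ Finset.Icc 1 n :=
    fun b hb x hx => (hP.2.2.2 x).1 ⟨b, hb, hx⟩
  have hinj : Set.InjOn (flipL n) P := by
    intro b hb c hc h
    rw [← flipL_flipL (hIcc b hb), h, flipL_flipL (hIcc c hc)]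
  have h1 : partWeight (flipP n P) = ∑ b ∈ P, blockWeight (flipL n b) := by
    rw [partWeight, flipP]
    exact Finset.sum_image fun x hx y hy h => hinj hx hy h
  have key : ∀ b ∈ P, (blockWeight (flipL n b) : ℤ) = (b.length : ℤ) - blockWeight b - 1 := by
    intro b hb
    have := blockWeight_flip n b (hP.2.1 b hb).1 (hP.2.1 b hb).2 (hIcc b hb)
    omega
  have hL := sum_lengths hP
  have hc := hP.1
  rw [h1]
  push_cast
  rw [Finset.sum_congr rfl key, Finset.sum_sub_distrib, Finset.sum_sub_distrib,
    Finset.sum_const, hc]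
  have hL' : ∑ b ∈ P, (b.length : ℤ) = (n : ℤ) := by exact_mod_cast congrArg Nat.cast hL
  have hW : (partWeight P : ℤ) = ∑ b ∈ P, (blockWeight b : ℤ) := by
    rw [partWeight]; push_cast; rfl
  rw [hL', hW]
  push_cast
  ring

lemma flipP_flipP {n m : ℕ} {P : Finset (List ℕ)} (hP : IsLOPartition n m P) :
    flipP n (flipP n P) = P := by
  rw [flipP, flipP, Finset.image_image]
  have h : Set.EqOn (flipL n ∘ flipL n) id P :=
    fun b hb => flipL_flipL fun x hx => (hP.2.2.2 x).1 ⟨b, hb, hx⟩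
  calc P.image (flipL n ∘ flipL n) = P.image id := Finset.image_congr h
    _ = P := Finset.image_id

/-- symmetry of the weighted Lah numbers:
`W(ℓ,n,m) = W(n-m-ℓ,n,m)` for `0 ≤ ℓ ≤ n - m`. -/
theorem stmt_6 (n m : ℕ) (hm : 1 ≤ m) (hmn : m ≤ n) (ℓ : ℕ) (hℓ : ℓ ≤ n - m) :
    weightedLah (ℓ : ℤ) n m = weightedLah ((n : ℤ) - (m : ℤ) - (ℓ : ℤ)) n m := by
  refine Nat.card_congr
    ⟨fun P => ⟨flipP n P.1, isLOP_flip P.2.1, by rw [partWeight_flip P.2.1, P.2.2]⟩,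
     fun P => ⟨flipP n P.1, isLOP_flip P.2.1, by rw [partWeight_flip P.2.1, P.2.2]; ring⟩,
     fun P => Subtype.ext (flipP_flipP P.2.1),
     fun P => Subtype.ext (flipP_flipP P.2.1)⟩
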